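/- arXiv:0801.1766 — 5 statements merged into one kernel-verified Lean document; each statement's English description precedes it below -/
import Mathlib

section
/- Let A and B be the circulant-type variable matrices built from ρ and σ as above, and suppose A = P B Q for permutation matrices P, Q. Then there exist distinct i, j with σ⁻¹ρσ = ρ^{j−i}; in particular σρσ⁻¹ lies in the subgroup generated by ρ. -/
open Finset Matrix

/-- The cyclic permutation `(1 2 … n)`, acting on `ZMod n` by `j ↦ j + 1`. -/
def rho (n : ℕ) : Equiv.Perm (ZMod n) := Equiv.addLeft 1

/-- `M` is an `n × n` doubly stochastic matrix. -/
def IsDS (n : ℕ) [NeZero n] (M : Matrix (ZMod n) (ZMod n) ℝ) : Prop :=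
  (∀ i j, 0 ≤ M i j) ∧ (∀ i, ∑ j, M i j = 1) ∧ (∀ j, ∑ i, M i j = 1)

/-- The permutation matrix of `p` (entry `(i,j)` is `1` iff `p j = i`). -/
def PM {R : Type*} [Zero R] [One R] (n : ℕ) (p : Equiv.Perm (ZMod n)) :
    Matrix (ZMod n) (ZMod n) R :=
  fun i j => if p j = i then 1 else 0

/-- Friedland's polytope `Φ_{n,n}`: nonnegative `n² × n²` matrices, doubly stochastic in the
double-index sense, satisfying the partial-sum constraints. -/
def Phi (n : ℕ) [NeZero n] : Set (Matrix (ZMod n × ZMod n) (ZMod n × ZMod n) ℝ) :=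
  {C | (∀ p q, 0 ≤ C p q) ∧
       (∀ p, ∑ q, C p q = 1) ∧ (∀ q, ∑ p, C p q = 1) ∧
       (∀ i k l, ∑ j, C (i, k) (j, l) = ∑ j, C (0, k) (j, l)) ∧
       (∀ i k l, ∑ j, C (j, k) (i, l) = ∑ j, C (0, k) (j, l)) ∧
       (∀ i j k, ∑ l, C (i, k) (j, l) = ∑ l, C (i, 0) (j, l)) ∧
       (∀ i j k, ∑ l, C (i, l) (j, k) = ∑ l, C (i, 0) (j, l))}

/-- The polytope `Ψ_{n,n}`: the convex hull of Kronecker products of doubly stochastic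
matrices. -/
def Psi (n : ℕ) [NeZero n] : Set (Matrix (ZMod n × ZMod n) (ZMod n × ZMod n) ℝ) :=
  convexHull ℝ {M | ∃ A B, IsDS n A ∧ IsDS n B ∧ M = Matrix.kroneckerMap (· * ·) A B}

/-- The matrix `T`, with `T_{(i,k),(j,l)} = 1/n` iff `σρ^{j-1}(l) = ρ^{i-1}(k)`. -/
noncomputable def Tmat (n : ℕ) (σ : Equiv.Perm (ZMod n)) :
    Matrix (ZMod n × ZMod n) (ZMod n × ZMod n) ℝ :=
  fun p q => if σ (q.2 + q.1) = p.2 + p.1 then (1 : ℝ) / n else 0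

/-- The circulant matrix of variables whose `i`-th row is `ρ^{i-1}` applied to
`(x_1, …, x_n)`, i.e. `A_{i,k} = x_{ρ^{i-1}(k)}`. -/
noncomputable def Amat (n : ℕ) : Matrix (ZMod n) (ZMod n) (MvPolynomial (ZMod n) ℝ) :=
  fun i k => MvPolynomial.X (k + i)

/-- The matrix of variables with `B_{j,l} = x_{σ(ρ^{j-1}(l))}`. -/
noncomputable def Bmat (n : ℕ) (σ : Equiv.Perm (ZMod n)) :
    Matrix (ZMod n) (ZMod n) (MvPolynomial (ZMod n) ℝ) :=
  fun j l => MvPolynomial.X (σ (l + j))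

lemma PM_mul {n : ℕ} [NeZero n] (p : Equiv.Perm (ZMod n))
    (M : Matrix (ZMod n) (ZMod n) (MvPolynomial (ZMod n) ℝ)) (i k : ZMod n) :
    (PM (R := MvPolynomial (ZMod n) ℝ) n p * M) i k = M (p.symm i) k := by
  simp only [Matrix.mul_apply, PM, ite_mul, one_mul, zero_mul]
  rw [Finset.sum_eq_single (p.symm i)] <;> simp +contextual [Equiv.eq_symm_apply]

lemma mul_PM {n : ℕ} [NeZero n] (q : Equiv.Perm (ZMod n))
    (M : Matrix (ZMod n) (ZMod n) (MvPolynomial (ZMod n) ℝ)) (i k : ZMod n) :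
    (M * PM (R := MvPolynomial (ZMod n) ℝ) n q) i k = M i (q k) := by
  simp only [Matrix.mul_apply, PM, mul_ite, mul_one, mul_zero]
  rw [Finset.sum_eq_single (q k)] <;> simp +contextual [eq_comm]

lemma rho_pow {n : ℕ} (k : ℕ) (x : ZMod n) : (rho n ^ k) x = x + k := by
  induction k with
  | zero => simp
  | succ m ih =>
    rw [pow_succ', Equiv.Perm.mul_apply, ih]
    simp only [rho, Equiv.coe_addLeft]
    push_cast; ring

/-- If `A = P B Q` for permutation matrices `P, Q`, then `σ⁻¹ρσ = ρ^{j-i}` for some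
distinct `i, j`; in particular `σρσ⁻¹ ∈ ⟨ρ⟩`. -/
theorem stmt7 (n : ℕ) [NeZero n] (σ : Equiv.Perm (ZMod n))
    (h : ∃ p q : Equiv.Perm (ZMod n), Amat n = PM n p * Bmat n σ * PM n q) :
    (∃ i j : ℤ, i ≠ j ∧ σ⁻¹ * rho n * σ = rho n ^ (j - i)) ∧
      σ * rho n * σ⁻¹ ∈ Subgroup.zpowers (rho n) := by
  obtain ⟨p, q, hA⟩ := h
  have key : ∀ (a k : ZMod n), σ (q k + a) = k + p a := by
    intro a k
    have h1 := congrFun (congrFun hA (p a)) k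
    rw [mul_PM, PM_mul, Equiv.symm_apply_apply] at h1
    simp only [Amat, Bmat] at h1
    exact (MvPolynomial.X_injective h1).symm
  have hσ : ∀ y, σ y = q.symm y + p 0 := by
    intro y
    have := key 0 (q.symm y)
    simpa using this
  have hf : ∀ u a : ZMod n, q.symm (u + a) = q.symm u + (p a - p 0) := by
    intro u a
    have h1 := key a (q.symm u)
    rw [Equiv.apply_symm_apply] at h1
    rw [hσ (u + a)] at h1
    linear_combination h1
  set m : ZMod n := p 1 - p 0 with hmdef
  have hadd : ∀ a b : ZMod n, p (a + b) - p 0 = (p a - p 0) + (p b - p 0) := by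
    intro a b
    have h1 := hf 0 (a + b)
    have h2 := hf a b
    have h3 := hf 0 a
    simp only [zero_add] at h1 h3
    linear_combination h2 + h3 - h1
  have hnat : ∀ k : ℕ, p ((k : ZMod n)) - p 0 = (k : ZMod n) * m := by
    intro k
    induction k with
    | zero => simp
    | succ j ih =>
      push_cast
      linear_combination hadd (j : ZMod n) 1 + ih
  have hfx : ∀ x : ZMod n, p x - p 0 = x * m := by
    intro x
    have := hnat x.val
    simpa [ZMod.natCast_val, ZMod.cast_id] using this
  have hinj : Function.Injective (fun x : ZMod n => x * m) := by
    intro a b hab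
    apply p.injective
    have h1 := hfx a
    have h2 := hfx b
    simp only at hab
    linear_combination h1 - h2 + hab
  obtain ⟨e, he⟩ : ∃ e : ZMod n, e * m = 1 :=
    (Finite.injective_iff_surjective.mp hinj) 1
  have hstep : ∀ y : ZMod n, σ (y + 1) = σ y + m := by
    intro y
    rw [hσ, hσ, hf]
    ring
  have hse : ∀ x : ZMod n, σ (x + e) = 1 + σ x := by
    intro x
    rw [hσ, hσ, hf]
    linear_combination hfx e + he
  have hord : (rho n) ^ n = 1 := by
    ext x
    simp [rho_pow, ZMod.natCast_self]
  have hval : ((e.val : ℕ) : ZMod n) = e := by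
    simp [ZMod.natCast_val, ZMod.cast_id]
  have hmval : ((m.val : ℕ) : ZMod n) = m := by
    simp [ZMod.natCast_val, ZMod.cast_id]
  have hconj1 : σ⁻¹ * rho n * σ = rho n ^ (e.val) := by
    ext x
    simp only [Equiv.Perm.mul_apply, rho_pow, hval]
    rw [show σ⁻¹ = σ.symm from rfl, Equiv.symm_apply_eq, hse]
    simp [rho, Equiv.coe_addLeft]
  have hconj2 : σ * rho n * σ⁻¹ = rho n ^ (m.val) := by
    ext x
    simp only [Equiv.Perm.mul_apply, rho_pow, hmval]
    rw [show σ⁻¹ = σ.symm from rfl]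
    rw [show (rho n) (σ.symm x) = σ.symm x + 1 from by
      simp [rho, Equiv.coe_addLeft]; ring]
    rw [hstep, Equiv.apply_symm_apply]
  constructor
  · refine ⟨-(n : ℤ), (e.val : ℤ), ?_, ?_⟩
    · have := Nat.pos_of_ne_zero (NeZero.ne n)
      omega
    · have : ((e.val : ℤ)) - (-(n : ℤ)) = ((e.val + n : ℕ) : ℤ) := by push_cast; ring
      rw [this, zpow_natCast, pow_add, hord, mul_one, hconj1]
  · exact Subgroup.mem_zpowers_iff.mpr ⟨(m.val : ℤ), by rw [zpow_natCast, ← hconj2]⟩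
end

section
/- The polytope Ψ_{n,n}, defined as the convex hull of all tensor (Kronecker) products A ⊗ B of n×n doubly stochastic matrices A, B, is contained in the polytope Φ_{n,n} ⊆ Ω_{n²} defined by the Friedland linear constraints. -/
open Finset Matrix

/-- `Ψ_{n,n} ⊆ Φ_{n,n}`. -/
theorem stmt8 (n : ℕ) [NeZero n] : Psi n ⊆ Phi n := by
  have hconv : Convex ℝ (Phi n) := by
    intro C hC D hD a b ha hb hab
    obtain ⟨h0, h1, h2, h3, h4, h5, h6⟩ := hC
    obtain ⟨g0, g1, g2, g3, g4, g5, g6⟩ := hD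
    have key : ∀ p q, (a • C + b • D) p q = a * C p q + b * D p q := by
      intro p q; simp [Matrix.add_apply, Matrix.smul_apply, smul_eq_mul]
    refine ⟨fun p q => ?_, fun p => ?_, fun q => ?_, fun i k l => ?_, fun i k l => ?_,
      fun i j k => ?_, fun i j k => ?_⟩ <;>
      simp only [key, Finset.sum_add_distrib, ← Finset.mul_sum]
    · exact add_nonneg (mul_nonneg ha (h0 p q)) (mul_nonneg hb (g0 p q))
    · rw [h1, g1]; linarith
    · rw [h2, g2]; linarith
    · rw [h3 i k l, g3 i k l]
    · rw [h4 i k l, g4 i k l]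
    · rw [h5 i j k, g5 i j k]
    · rw [h6 i j k, g6 i j k]
  apply convexHull_min _ hconv
  rintro M ⟨A, B, ⟨hA0, hA1, hA2⟩, ⟨hB0, hB1, hB2⟩, rfl⟩
  refine ⟨fun p q => mul_nonneg (hA0 _ _) (hB0 _ _), fun p => ?_, fun q => ?_,
    fun i k l => ?_, fun i k l => ?_, fun i j k => ?_, fun i j k => ?_⟩
  · rw [Fintype.sum_prod_type]
    simp only [kroneckerMap_apply, ← Finset.mul_sum, hB1]
    simpa using hA1 p.1
  · rw [Fintype.sum_prod_type]
    simp only [kroneckerMap_apply, ← Finset.mul_sum, hB2]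
    simpa using hA2 q.1
  · simp only [kroneckerMap_apply, ← Finset.sum_mul, hA1]
  · simp only [kroneckerMap_apply, ← Finset.sum_mul, hA2, hA1]
  · simp only [kroneckerMap_apply, ← Finset.mul_sum, hB1]
  · simp only [kroneckerMap_apply, ← Finset.mul_sum, hB2, hB1]
end

section
/- The matrix T (with entries T_{(i,k),(j,l)} = (1/n)·[σρ^{j-1}(l) = ρ^{i-1}(k)]) belongs to the polytope Φ_{n,n}; moreover for each fixed pair (i,j), the n×n block (T_{(i,k),(j,l)})_{k,l} equals 1/n times a permutation matrix. -/
open Finset Matrix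

lemma key (n : ℕ) [NeZero n] (P : ZMod n → Prop) [DecidablePred P] (b : ZMod n)
    (h : ∀ x, P x ↔ x = b) :
    ∑ x, (if P x then (1 : ℝ) / n else 0) = 1 / n := by
  simp only [h]
  simp

lemma keyn (n : ℕ) [NeZero n] : ∑ _x : ZMod n, (1 : ℝ) / n = 1 := by
  have hn : (n : ℝ) ≠ 0 := Nat.cast_ne_zero.mpr (NeZero.ne n)
  simp [Finset.sum_const, ZMod.card, nsmul_eq_mul]

/-- `T ∈ Φ_{n,n}`, and each `(i,j)` block of `T` is `1/n` times a permutation matrix. -/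
theorem stmt11 (n : ℕ) [NeZero n] (σ : Equiv.Perm (ZMod n)) :
    Tmat n σ ∈ Phi n ∧
      ∀ i j : ZMod n, ∃ τ : Equiv.Perm (ZMod n),
        ∀ k l : ZMod n, Tmat n σ (i, k) (j, l) = (1 / n : ℝ) * PM n τ k l := by
  have hn : (n : ℝ) ≠ 0 := Nat.cast_ne_zero.mpr (NeZero.ne n)
  constructor
  · refine ⟨?_, ?_, ?_, ?_, ?_, ?_, ?_⟩
    · intro p q
      unfold Tmat
      positivity
    · intro p
      rw [Fintype.sum_prod_type]
      have : ∀ j : ZMod n, ∑ l : ZMod n, Tmat n σ p (j, l) = 1 / n := by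
        intro j
        simp only [Tmat]
        exact key n _ (σ.symm (p.2 + p.1) - j) (fun x => by
          rw [← Equiv.eq_symm_apply, eq_sub_iff_add_eq])
      simp only [this]
      exact keyn n
    · intro q
      rw [Fintype.sum_prod_type]
      have : ∀ i : ZMod n, ∑ k : ZMod n, Tmat n σ (i, k) q = 1 / n := by
        intro i
        simp only [Tmat]
        exact key n _ (σ (q.2 + q.1) - i) (fun x => by
          rw [eq_comm, eq_sub_iff_add_eq])
      simp only [this]
      exact keyn n
    · intro i k l
      have h : ∀ i : ZMod n, ∑ j, Tmat n σ (i, k) (j, l) = 1 / n := by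
        intro i
        simp only [Tmat]
        exact key n _ (σ.symm (k + i) - l) (fun x => by
          rw [← Equiv.eq_symm_apply, add_comm l x, eq_sub_iff_add_eq])
      rw [h, h]
    · intro i k l
      have h1 : ∑ j, Tmat n σ (j, k) (i, l) = 1 / n := by
        simp only [Tmat]
        exact key n _ (σ (l + i) - k) (fun x => by
          rw [eq_comm, eq_sub_iff_add_eq, add_comm x k])
      have h2 : ∑ j, Tmat n σ (0, k) (j, l) = 1 / n := by
        simp only [Tmat]
        exact key n _ (σ.symm (k + 0) - l) (fun x => by
          rw [← Equiv.eq_symm_apply, add_comm l x, eq_sub_iff_add_eq])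
      rw [h1, h2]
    · intro i j k
      have h : ∀ k : ZMod n, ∑ l, Tmat n σ (i, k) (j, l) = 1 / n := by
        intro k
        simp only [Tmat]
        exact key n _ (σ.symm (k + i) - j) (fun x => by
          rw [← Equiv.eq_symm_apply, eq_sub_iff_add_eq])
      rw [h, h]
    · intro i j k
      have h1 : ∑ l, Tmat n σ (i, l) (j, k) = 1 / n := by
        simp only [Tmat]
        exact key n _ (σ (k + j) - i) (fun x => by
          rw [eq_comm, eq_sub_iff_add_eq])
      have h2 : ∑ l, Tmat n σ (i, 0) (j, l) = 1 / n := by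
        simp only [Tmat]
        exact key n _ (σ.symm (0 + i) - j) (fun x => by
          rw [← Equiv.eq_symm_apply, eq_sub_iff_add_eq])
      rw [h1, h2]
  · intro i j
    refine ⟨(Equiv.addRight j).trans (σ.trans (Equiv.subRight i)), fun k l => ?_⟩
    simp only [Tmat, PM, Equiv.trans_apply, Equiv.coe_addRight, Equiv.subRight_apply]
    by_cases h : σ (l + j) = k + i
    · rw [if_pos h, if_pos (by rw [h]; ring), mul_one]
    · rw [if_neg h, if_neg (fun hc => h (by rw [← sub_eq_iff_eq_add] at *; exact hc)), mul_zero]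
end

section
/- Suppose C ∈ Φ_{n,n} and for each pair (i,j) the support of the block (C_{(i,k),(j,l)})_{k,l} is contained in the support of a fixed permutation matrix P^{(i,j)}. Then there is a doubly stochastic matrix M ∈ Ω_n such that C_{(i,k),(j,l)} = M_{i,j} · P^{(i,j)}_{k,l}. -/
open Finset Matrix

/-- If `C ∈ Φ_{n,n}` and each `(i,j)` block of `C` is supported inside a fixed permutation
matrix `P^{(i,j)}`, then `C_{(i,k),(j,l)} = M_{i,j} · P^{(i,j)}_{k,l}` for some doubly
stochastic matrix `M`. -/
theorem stmt13 (n : ℕ) [NeZero n]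
    (C : Matrix (ZMod n × ZMod n) (ZMod n × ZMod n) ℝ) (hC : C ∈ Phi n)
    (p : ZMod n → ZMod n → Equiv.Perm (ZMod n))
    (hsupp : ∀ i j k l, C (i, k) (j, l) ≠ 0 → p i j l = k) :
    ∃ M : Matrix (ZMod n) (ZMod n) ℝ, IsDS n M ∧
      ∀ i j k l, C (i, k) (j, l) = M i j * PM n (p i j) k l := by
  obtain ⟨hnn, hrow, hcol, h1, h2, h3, h4⟩ := hC
  refine ⟨fun i j => ∑ l, C (i, 0) (j, l), ⟨?_, ?_, ?_⟩, ?_⟩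
  · intro i j; exact Finset.sum_nonneg fun l _ => hnn _ _
  · intro i
    have := hrow (i, 0)
    rw [Fintype.sum_prod_type] at this
    exact this
  · intro j
    calc ∑ i, ∑ l, C (i, 0) (j, l) = ∑ l, ∑ i, C (i, 0) (j, l) := Finset.sum_comm
    _ = ∑ l, ∑ i, C (0, 0) (i, l) := Finset.sum_congr rfl fun l _ => h2 j 0 l
    _ = 1 := by
        have := hrow ((0 : ZMod n), (0 : ZMod n))
        rw [Fintype.sum_prod_type] at this
        rw [Finset.sum_comm]
        exact this
  · intro i j k l
    by_cases h : p i j l = k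
    · have hs : ∑ l', C (i, k) (j, l') = C (i, k) (j, l) := by
        apply Finset.sum_eq_single
        · intro l' _ hl'
          by_contra hc
          exact hl' ((p i j).injective ((hsupp i j k l' hc).trans h.symm))
        · simp
      rw [show (PM n (p i j) k l : ℝ) = 1 from by simp [PM, h], mul_one]
      show C (i, k) (j, l) = ∑ l, C (i, 0) (j, l)
      rw [← h3 i j k, hs]
    · have hz : C (i, k) (j, l) = 0 := by
        by_contra hc
        exact h (hsupp i j k l hc)
      simp [PM, h, hz]
end

section
/- For every n ≥ 4, there exists σ ∈ S_n with σρσ⁻¹ ∉ ⟨ρ⟩ (where ρ = (1 2 … n)), and hence Φ_{n,n} ≠ Ψ_{n,n}: the corresponding matrix T is a vertex of Φ_{n,n} that is not in Ψ_{n,n}. In particular n! > n·φ(n) for n ≥ 4. -/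
open Finset Matrix

set_option linter.unusedSectionVars false

section helpers
variable {n : ℕ} [NeZero n]

lemma sum_ite_unique (P : ZMod n → Prop) [DecidablePred P] (a : ZMod n)
    (h : ∀ x, P x ↔ x = a) (r : ℝ) :
    ∑ x : ZMod n, (if P x then r else 0) = r := by
  rw [Finset.sum_congr rfl fun x _ => if_congr (h x) rfl rfl,
    Finset.sum_ite_eq' Finset.univ a fun _ => r, if_pos (Finset.mem_univ a)]

lemma ncast_ne (a b : ℕ) (ha : a < n) (hb : b < n) (hab : a ≠ b) :
    (a : ZMod n) ≠ (b : ZMod n) := fun h => hab (by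
  have := congrArg ZMod.val h
  rwa [ZMod.val_cast_of_lt ha, ZMod.val_cast_of_lt hb] at this)

variable (σ : Equiv.Perm (ZMod n))

lemma S1 (c j : ZMod n) : ∑ l : ZMod n, (if σ (l + j) = c then (1:ℝ)/n else 0) = 1/n :=
  sum_ite_unique _ (σ.symm c - j) (fun l => by
    rw [Equiv.apply_eq_iff_eq_symm_apply]
    constructor <;> intro h <;> linear_combination h) _

lemma S2 (c l : ZMod n) : ∑ j : ZMod n, (if σ (l + j) = c then (1:ℝ)/n else 0) = 1/n :=
  sum_ite_unique _ (σ.symm c - l) (fun j => by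
    rw [Equiv.apply_eq_iff_eq_symm_apply]
    constructor <;> intro h <;> linear_combination h) _

lemma S3 (c k : ZMod n) : ∑ j : ZMod n, (if σ c = k + j then (1:ℝ)/n else 0) = 1/n :=
  sum_ite_unique _ (σ c - k) (fun j => by
    constructor <;> intro h <;> linear_combination -h) _

lemma S4 (c i : ZMod n) : ∑ l : ZMod n, (if σ c = l + i then (1:ℝ)/n else 0) = 1/n :=
  sum_ite_unique _ (σ c - i) (fun l => by
    constructor <;> intro h <;> linear_combination -h) _

lemma hn0 : (n:ℝ) ≠ 0 := Nat.cast_ne_zero.mpr (NeZero.ne n)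

lemma T_mem_Phi : Tmat n σ ∈ Phi n := by
  refine ⟨fun p q => ?_, fun p => ?_, fun q => ?_, fun i k l => ?_, fun i k l => ?_,
    fun i j k => ?_, fun i j k => ?_⟩
  · unfold Tmat; positivity
  · rw [Fintype.sum_prod_type]
    simp only [Tmat]
    rw [Finset.sum_congr rfl fun j _ => S1 σ (p.2 + p.1) j, Finset.sum_const,
      Finset.card_univ, ZMod.card, nsmul_eq_mul]
    field_simp
    exact div_self hn0
  · rw [Fintype.sum_prod_type]
    simp only [Tmat]
    rw [Finset.sum_congr rfl fun i _ => S4 σ (q.2 + q.1) i, Finset.sum_const,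
      Finset.card_univ, ZMod.card, nsmul_eq_mul]
    field_simp
    exact div_self hn0
  · simp only [Tmat]; rw [S2, S2]
  · simp only [Tmat]; rw [S3, S2]
  · simp only [Tmat]; rw [S1, S1]
  · simp only [Tmat]; rw [S4, S1]

end helpers

section part2
variable {n : ℕ} [NeZero n]

lemma Phi_convex : Convex ℝ (Phi n) := by
  intro x hx y hy a b ha hb hab
  obtain ⟨x0, xr, xc, x4, x5, x6, x7⟩ := hx
  obtain ⟨y0, yr, yc, y4, y5, y6, y7⟩ := hy
  have key : ∀ p q, (a • x + b • y) p q = a * x p q + b * y p q := fun p q => by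
    simp [Matrix.add_apply, Matrix.smul_apply, smul_eq_mul]
  refine ⟨fun p q => ?_, fun p => ?_, fun q => ?_, fun i k l => ?_, fun i k l => ?_,
    fun i j k => ?_, fun i j k => ?_⟩
  · rw [key]; exact add_nonneg (mul_nonneg ha (x0 p q)) (mul_nonneg hb (y0 p q))
  · simp only [key, Finset.sum_add_distrib, ← Finset.mul_sum, xr, yr, mul_one]; exact hab
  · simp only [key, Finset.sum_add_distrib, ← Finset.mul_sum, xc, yc, mul_one]; exact hab
  · simp only [key, Finset.sum_add_distrib, ← Finset.mul_sum]; rw [x4 i k l, y4 i k l]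
  · simp only [key, Finset.sum_add_distrib, ← Finset.mul_sum]; rw [x5 i k l, y5 i k l]
  · simp only [key, Finset.sum_add_distrib, ← Finset.mul_sum]; rw [x6 i j k, y6 i j k]
  · simp only [key, Finset.sum_add_distrib, ← Finset.mul_sum]; rw [x7 i j k, y7 i j k]

lemma kron_mem_Phi (A B : Matrix (ZMod n) (ZMod n) ℝ) (hA : IsDS n A) (hB : IsDS n B) :
    Matrix.kroneckerMap (· * ·) A B ∈ Phi n := by
  obtain ⟨A0, Ar, Ac⟩ := hA
  obtain ⟨B0, Br, Bc⟩ := hB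
  have key : ∀ p q : ZMod n × ZMod n,
      Matrix.kroneckerMap (· * ·) A B p q = A p.1 q.1 * B p.2 q.2 := fun p q => rfl
  refine ⟨fun p q => ?_, fun p => ?_, fun q => ?_, fun i k l => ?_, fun i k l => ?_,
    fun i j k => ?_, fun i j k => ?_⟩
  · rw [key]; exact mul_nonneg (A0 _ _) (B0 _ _)
  · rw [Fintype.sum_prod_type]
    simp only [key, ← Finset.mul_sum, Br, mul_one, ← Finset.sum_mul]
    simpa using Ar p.1
  · rw [Fintype.sum_prod_type]
    simp only [key, ← Finset.mul_sum, Bc, mul_one]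
    exact Ac q.1
  · simp only [key, ← Finset.sum_mul]; rw [Ar, Ar]
  · simp only [key, ← Finset.sum_mul]; rw [Ac, Ar]
  · simp only [key, ← Finset.mul_sum]; rw [Br, Br]
  · simp only [key, ← Finset.mul_sum, Bc, Br, mul_one]

lemma Psi_subset_Phi : Psi n ⊆ Phi n := by
  apply convexHull_min _ Phi_convex
  rintro M ⟨A, B, hA, hB, rfl⟩
  exact kron_mem_Phi A B hA hB

end part2
section zfacts
variable {n : ℕ} [NeZero n]

lemma z10 (hn : 4 ≤ n) : (1:ZMod n) ≠ 0 := by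
  have := ncast_ne (n := n) 1 0 (by omega) (by omega) (by omega); simpa using this
lemma z20 (hn : 4 ≤ n) : (2:ZMod n) ≠ 0 := by
  have := ncast_ne (n := n) 2 0 (by omega) (by omega) (by omega); simpa using this
lemma z21 (hn : 4 ≤ n) : (2:ZMod n) ≠ 1 := by
  have := ncast_ne (n := n) 2 1 (by omega) (by omega) (by omega); simpa using this
lemma z30 (hn : 4 ≤ n) : (3:ZMod n) ≠ 0 := by
  have := ncast_ne (n := n) 3 0 (by omega) (by omega) (by omega); simpa using this
lemma z31 (hn : 4 ≤ n) : (3:ZMod n) ≠ 1 := by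
  have := ncast_ne (n := n) 3 1 (by omega) (by omega) (by omega); simpa using this

lemma eq_T (hn : 4 ≤ n) (x : Matrix (ZMod n × ZMod n) (ZMod n × ZMod n) ℝ)
    (hx : x ∈ Phi n)
    (hz : ∀ p q, Tmat n (Equiv.swap (0:ZMod n) 1) p q = 0 → x p q = 0) :
    x = Tmat n (Equiv.swap (0:ZMod n) 1) := by
  set σ := Equiv.swap (0:ZMod n) 1 with hσ
  obtain ⟨x0, xr, xc, x4, x5, x6, x7⟩ := hx
  have s0 : σ 0 = 1 := Equiv.swap_apply_left 0 1
  have s1 : σ 1 = 0 := Equiv.swap_apply_right 0 1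
  have s2 : σ 2 = 2 := Equiv.swap_apply_of_ne_of_ne (z20 hn) (z21 hn)
  have s3 : σ 3 = 3 := Equiv.swap_apply_of_ne_of_ne (z30 hn) (z31 hn)
  have hzero : ∀ i k j l : ZMod n, σ (l + j) ≠ k + i → x (i,k) (j,l) = 0 := by
    intro i k j l h
    apply hz
    simp [Tmat, h]
  let f : ZMod n → ZMod n → ℝ := fun i j => ∑ l, x (i, 0) (j, l)
  let g : ZMod n → ZMod n → ℝ := fun k l => ∑ j, x (0, k) (j, l)
  have stepA : ∀ i k j l : ZMod n, σ (l + j) = k + i → x (i,k) (j,l) = f i j := by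
    intro i k j l h
    have hsingle : ∑ l' : ZMod n, x (i,k) (j,l') = x (i,k) (j,l) := by
      apply Finset.sum_eq_single
      · intro b _ hb
        apply hzero
        intro hc
        exact hb (add_right_cancel (σ.injective (hc.trans h.symm)))
      · intro hl; exact absurd (Finset.mem_univ l) hl
    exact hsingle.symm.trans (x6 i j k)
  have stepB : ∀ i k j l : ZMod n, σ (l + j) = k + i → x (i,k) (j,l) = g k l := by
    intro i k j l h
    have hsingle : ∑ j' : ZMod n, x (i,k) (j',l) = x (i,k) (j,l) := by
      apply Finset.sum_eq_single
      · intro b _ hb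
        apply hzero
        intro hc
        exact hb (add_left_cancel (σ.injective (hc.trans h.symm)))
      · intro hl; exact absurd (Finset.mem_univ j) hl
    exact hsingle.symm.trans (x4 i k l)
  have stepC : ∀ i j k l : ZMod n, σ (l + j) = k + i → f i j = g k l :=
    fun i j k l h => (stepA i k j l h).symm.trans (stepB i k j l h)
  have stepD : ∀ i j j' l : ZMod n, f i j = f (σ (l + j') - σ (l + j) + i) j' := by
    intro i j j' l
    have h1 : f i j = g (σ (l+j) - i) l := stepC i j _ l (by ring)
    have h2 : f (σ (l + j') - σ (l + j) + i) j' = g (σ (l+j) - i) l :=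
      stepC _ j' _ l (by ring)
    rw [h1, h2]
  have stepE : ∀ i j : ZMod n, f (1 + i) j = f i j := by
    intro i j
    have h1 := stepD i j (j+1) (1-j)
    rw [show (1 - j) + (j+1) = (2:ZMod n) by ring, show (1 - j) + j = (1:ZMod n) by ring,
      s2, s1] at h1
    have h2 := stepD (σ (2:ZMod n) - σ (1:ZMod n) + i) (j+1) j (2 - j)
    rw [s2, s1, show (2 - j) + j = (2:ZMod n) by ring,
      show (2 - j) + (j+1) = (3:ZMod n) by ring, s2, s3] at h2
    rw [h1, h2, show (2:ZMod n) - 3 + (2 - 0 + i) = 1 + i by ring]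
  have stepF : ∀ i i' j : ZMod n, f i j = f i' j := by
    have key : ∀ (m : ℕ) (i j : ZMod n), f (i + (m:ZMod n)) j = f i j := by
      intro m
      induction m with
      | zero => intro i j; simp
      | succ m ih =>
        intro i j
        rw [show i + ((m+1 : ℕ) : ZMod n) = 1 + (i + (m:ZMod n)) by push_cast; ring,
          stepE, ih]
    intro i i' j
    have h := key (i' - i).val i j
    rw [show (((i'-i).val : ℕ) : ZMod n) = i' - i from ZMod.natCast_rightInverse _,
      show i + (i' - i) = i' by ring] at h
    exact h.symm
  have stepG : ∀ i j j' : ZMod n, f i j = f i j' := by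
    intro i j j'
    have h := stepD i j j' (-j)
    rw [show (-j + j) = (0:ZMod n) by ring, s0] at h
    exact h.trans (stepF _ i j')
  have fconst : ∀ i j : ZMod n, f i j = f 0 0 :=
    fun i j => (stepF i 0 j).trans (stepG 0 j 0)
  have fval : f 0 0 = 1/(n:ℝ) := by
    have h := xr (0,0)
    rw [Fintype.sum_prod_type] at h
    rw [Finset.sum_congr rfl fun j _ => ((rfl : f 0 j = _).symm.trans (fconst 0 j)),
      Finset.sum_const, Finset.card_univ, ZMod.card, nsmul_eq_mul] at h
    field_simp at h ⊢
    linarith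
  funext p q
  obtain ⟨i, k⟩ := p; obtain ⟨j, l⟩ := q
  by_cases h : σ (l + j) = k + i
  · rw [stepA i k j l h, fconst i j, fval]
    simp [Tmat, h]
  · rw [hzero i k j l h]
    simp [Tmat, h]

end zfacts

/-- For every `n ≥ 4` there is `σ` with `σρσ⁻¹ ∉ ⟨ρ⟩`; the corresponding `T` is an extreme
point of `Φ_{n,n}` not belonging to `Ψ_{n,n}`, whence `Φ_{n,n} ≠ Ψ_{n,n}`.
In particular `n! > n·φ(n)`. -/
theorem stmt19 (n : ℕ) [NeZero n] (hn : 4 ≤ n) :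
    (∃ σ : Equiv.Perm (ZMod n),
        σ * rho n * σ⁻¹ ∉ Subgroup.zpowers (rho n) ∧
        Tmat n σ ∈ Set.extremePoints ℝ (Phi n) ∧
        Tmat n σ ∉ Psi n) ∧
      Phi n ≠ Psi n ∧ n * Nat.totient n < Nat.factorial n := by
  set σ := Equiv.swap (0:ZMod n) 1 with hσdef
  have s0 : σ 0 = 1 := Equiv.swap_apply_left 0 1
  have s2 : σ 2 = 2 := Equiv.swap_apply_of_ne_of_ne (z20 hn) (z21 hn)
  have s3 : σ 3 = 3 := Equiv.swap_apply_of_ne_of_ne (z30 hn) (z31 hn)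
  -- part 1 : the conjugate is not a power of rho
  have hσnot : σ * rho n * σ⁻¹ ∉ Subgroup.zpowers (rho n) := by
    intro hmem
    obtain ⟨k, hk⟩ := Subgroup.mem_zpowers_iff.mp hmem
    have hrk : ∀ y : ZMod n, (rho n ^ k) y = (k : ZMod n) + y := by
      intro y
      rw [show rho n = Equiv.addLeft (1 : ZMod n) from rfl, Equiv.zsmul_addLeft]
      simp [zsmul_one]
    have hinv : σ⁻¹ = σ := Equiv.swap_inv 0 1
    have h0 := DFunLike.congr_fun hk 0
    have h2 := DFunLike.congr_fun hk 2
    rw [hrk, Equiv.Perm.mul_apply, Equiv.Perm.mul_apply, hinv, s0,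
      show rho n (1:ZMod n) = 1 + 1 from rfl, show (1:ZMod n)+1 = 2 by norm_num, s2] at h0
    rw [hrk, Equiv.Perm.mul_apply, Equiv.Perm.mul_apply, hinv, s2,
      show rho n (2:ZMod n) = 1 + 2 from rfl, show (1:ZMod n)+2 = 3 by norm_num, s3] at h2
    -- h0 : ↑k + 0 = 2, h2 : ↑k + 2 = 3
    exact z10 hn (by linear_combination h2 - h0)
  -- part 2 : extreme point
  have hT : Tmat n σ ∈ Set.extremePoints ℝ (Phi n) := by
    refine ⟨T_mem_Phi σ, ?_⟩
    rintro x₁ hx₁ x₂ hx₂ ⟨a, b, ha, hb, hab, hsum⟩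
    have hzz : ∀ (y : Matrix (ZMod n × ZMod n) (ZMod n × ZMod n) ℝ),
        y ∈ Phi n → (∀ p q, a * x₁ p q + b * x₂ p q = Tmat n σ p q) →
        True := fun _ _ _ => trivial
    have hent : ∀ p q, a * x₁ p q + b * x₂ p q = Tmat n σ p q := by
      intro p q
      have := congrFun (congrFun hsum p) q
      simpa [Matrix.add_apply, Matrix.smul_apply, smul_eq_mul] using this
    have key : ∀ (y : Matrix (ZMod n × ZMod n) (ZMod n × ZMod n) ℝ) (c : ℝ), 0 < c →
        y ∈ Phi n → (∀ p q, c * y p q ≤ Tmat n σ p q) → y = Tmat n σ := by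
      intro y c hc hy hbd
      refine eq_T hn y hy ?_
      intro p q hpq
      have h1 := hbd p q
      rw [hpq] at h1
      have h2 := hy.1 p q
      nlinarith
    refine And.left (b := x₂ = Tmat n σ) ⟨?_, ?_⟩
    · refine key x₁ a ha hx₁ ?_
      intro p q
      have h1 := hx₂.1 p q
      have := hent p q
      nlinarith
    · refine key x₂ b hb hx₂ ?_
      intro p q
      have h1 := hx₁.1 p q
      have := hent p q
      nlinarith
  -- part 3 : not in Psi
  have hn0' : (n:ℝ) ≠ 0 := Nat.cast_ne_zero.mpr (NeZero.ne n)
  have hTnot : Tmat n σ ∉ Psi n := by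
    intro hmem
    have hext : Tmat n σ ∈ Set.extremePoints ℝ
        (convexHull ℝ {M | ∃ A B, IsDS n A ∧ IsDS n B ∧ M = Matrix.kroneckerMap (· * ·) A B}) :=
      ⟨hmem, fun x₁ h1 x₂ h2 hseg =>
        hT.2 (Psi_subset_Phi h1) (Psi_subset_Phi h2) hseg⟩
    obtain ⟨A, B, hA, hB, hTeq⟩ := extremePoints_convexHull_subset hext
    have hkr : ∀ i k j l : ZMod n, Matrix.kroneckerMap (· * ·) A B (i,k) (j,l) = A i j * B k l :=
      fun _ _ _ _ => rfl
    have hA1 : ∀ i j : ZMod n, A i j * (n:ℝ) = 1 := by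
      intro i j
      have h1 : ∑ k : ZMod n, ∑ l : ZMod n, Tmat n σ (i,k) (j,l) = 1 := by
        simp only [Tmat]
        rw [Finset.sum_congr rfl fun k _ => S1 σ (k + i) j, Finset.sum_const,
          Finset.card_univ, ZMod.card, nsmul_eq_mul]
        field_simp
      have h2 : ∑ k : ZMod n, ∑ l : ZMod n, Tmat n σ (i,k) (j,l) = A i j * n := by
        simp only [hTeq, hkr, ← Finset.mul_sum, hB.2.1, mul_one, Finset.sum_const,
          Finset.card_univ, ZMod.card, nsmul_eq_mul]
        ring
      rw [h2] at h1; exact h1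
    have hB1 : ∀ k l : ZMod n, B k l * (n:ℝ) = 1 := by
      intro k l
      have h1 : ∑ i : ZMod n, ∑ j : ZMod n, Tmat n σ (i,k) (j,l) = 1 := by
        simp only [Tmat]
        rw [Finset.sum_congr rfl fun i _ => S2 σ (k + i) l, Finset.sum_const,
          Finset.card_univ, ZMod.card, nsmul_eq_mul]
        field_simp
      have h2 : ∑ i : ZMod n, ∑ j : ZMod n, Tmat n σ (i,k) (j,l) = B k l * n := by
        simp only [hTeq, hkr, ← Finset.sum_mul, hA.2.1, one_mul, Finset.sum_const,
          Finset.card_univ, ZMod.card, nsmul_eq_mul]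
        ring
      rw [h2] at h1; exact h1
    have hz' : Tmat n σ ((0:ZMod n),(2:ZMod n)) ((0:ZMod n),(0:ZMod n)) = 0 := by
      have hne : σ (0:ZMod n) ≠ 2 := by
        rw [s0]; exact fun hh => z21 hn hh.symm
      simp [Tmat, hne]
    have hval := congrFun (congrFun hTeq ((0:ZMod n),(2:ZMod n))) ((0:ZMod n),(0:ZMod n))
    rw [hz', hkr] at hval
    have : (0:ℝ) = 1 := by
      calc (0:ℝ) = (A 0 0 * B 2 0) * ((n:ℝ)*(n:ℝ)) := by rw [← hval]; ring
      _ = (A 0 0 * (n:ℝ)) * (B 2 0 * (n:ℝ)) := by ring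
      _ = 1 := by rw [hA1, hB1]; ring
    norm_num at this
  -- arithmetic
  have harith : n * Nat.totient n < Nat.factorial n := by
    obtain ⟨m, rfl⟩ : ∃ m, n = m + 4 := ⟨n - 4, by omega⟩
    have h1 : Nat.totient (m+4) < m+4 := Nat.totient_lt _ (by omega)
    have h2 : (m+3) < Nat.factorial (m+3) := Nat.lt_factorial_self (by omega)
    calc (m+4) * Nat.totient (m+4) ≤ (m+4)*(m+3) := Nat.mul_le_mul_left _ (by omega)
      _ < (m+4) * Nat.factorial (m+3) := by
          have h4 : 0 < m+4 := by omega
          exact (mul_lt_mul_iff_right₀ h4).mpr h2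
      _ = Nat.factorial (m+4) := (Nat.factorial_succ (m+3)).symm
  exact ⟨⟨σ, hσnot, hT, hTnot⟩, fun heq => hTnot (heq ▸ hT.1), harith⟩
end
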